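/- For the linear-Gaussian homotopy ODEs dm_τ/dτ = -Σ_τ Gᵀ Γ⁻¹(G m_τ - t), dΣ_τ/dτ = -Σ_τ GᵀΓ⁻¹G Σ_τ with initial data m_0, Σ_0 (Σ_0 positive definite), the solutions are m_τ = m_0 - K_τ(G m_0 - t) and Σ_τ = Σ_0 - K_τ G Σ_0, where K_τ = τ Σ_0 Gᵀ (Γ + τ G Σ_0 Gᵀ)⁻¹ is the Kalman gain. -/

import Mathlib

open Matrix Set

attribute [local instance] Matrix.linftyOpNormedAddCommGroup Matrix.linftyOpNormedSpace
  Matrix.linftyOpNormedRing Matrix.linftyOpNormedAlgebra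

set_option maxHeartbeats 1000000

private theorem hasDerivAt_entries {n m : ℕ} {f : ℝ → Matrix (Fin n) (Fin m) ℝ}
    {f' : Matrix (Fin n) (Fin m) ℝ} {x : ℝ}
    (h : ∀ i j, HasDerivAt (fun τ => f τ i j) (f' i j) x) :
    HasDerivAt f f' x := by
  have key : ∀ g : Matrix (Fin n) (Fin m) ℝ,
      g = ∑ i, ∑ j, g i j • Matrix.single i j (1:ℝ) := by
    intro g
    conv_lhs => rw [matrix_eq_sum_single g]
    refine Finset.sum_congr rfl fun i _ => Finset.sum_congr rfl fun j _ => ?_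
    rw [Matrix.smul_single, smul_eq_mul, mul_one]
  have H : HasDerivAt (fun τ => ∑ i, ∑ j, f τ i j • Matrix.single i j (1:ℝ))
      (∑ i, ∑ j, f' i j • Matrix.single i j (1:ℝ)) x :=
    HasDerivAt.fun_sum fun i _ => HasDerivAt.fun_sum fun j _ => (h i j).smul_const _
  have e : (fun τ => ∑ i, ∑ j, f τ i j • Matrix.single i j (1:ℝ)) = f :=
    funext fun τ => (key (f τ)).symm
  rw [e, ← key f'] at H
  exact H

private theorem hasDerivAt_matrix_const_mul {n m p : ℕ} (C : Matrix (Fin n) (Fin m) ℝ)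
    {f : ℝ → Matrix (Fin m) (Fin p) ℝ} {f' : Matrix (Fin m) (Fin p) ℝ} {x : ℝ}
    (h : HasDerivAt f f' x) : HasDerivAt (fun s => C * f s) (C * f') x := by
  let L : Matrix (Fin m) (Fin p) ℝ →ₗ[ℝ] Matrix (Fin n) (Fin p) ℝ :=
    { toFun := fun Z => C * Z
      map_add' := fun a b => Matrix.mul_add C a b
      map_smul' := fun c a => Matrix.mul_smul C c a }
  exact L.toContinuousLinearMap.hasFDerivAt.comp_hasDerivAt x h

private theorem hasDerivAt_matrix_mul_const {n m p : ℕ} (C : Matrix (Fin m) (Fin p) ℝ)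
    {f : ℝ → Matrix (Fin n) (Fin m) ℝ} {f' : Matrix (Fin n) (Fin m) ℝ} {x : ℝ}
    (h : HasDerivAt f f' x) : HasDerivAt (fun s => f s * C) (f' * C) x := by
  let L : Matrix (Fin n) (Fin m) ℝ →ₗ[ℝ] Matrix (Fin n) (Fin p) ℝ :=
    { toFun := fun Z => Z * C
      map_add' := fun a b => Matrix.add_mul a b C
      map_smul' := fun c a => Matrix.smul_mul c a C }
  exact L.toContinuousLinearMap.hasFDerivAt.comp_hasDerivAt x h

private theorem hasDerivAt_mulVec_const {n m : ℕ} (r : Fin m → ℝ)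
    {f : ℝ → Matrix (Fin n) (Fin m) ℝ} {f' : Matrix (Fin n) (Fin m) ℝ} {x : ℝ}
    (h : HasDerivAt f f' x) : HasDerivAt (fun s => f s *ᵥ r) (f' *ᵥ r) x := by
  let L : Matrix (Fin n) (Fin m) ℝ →ₗ[ℝ] (Fin n → ℝ) :=
    { toFun := fun Z => Z *ᵥ r
      map_add' := fun a b => Matrix.add_mulVec a b r
      map_smul' := fun c a => Matrix.smul_mulVec c a r }
  exact L.toContinuousLinearMap.hasFDerivAt.comp_hasDerivAt x h

/-- the linear-Gaussian homotopy ODEs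
`dm/dτ = -Σ_τ Gᵀ Γ⁻¹ (G m_τ - t)` and `dΣ/dτ = -Σ_τ Gᵀ Γ⁻¹ G Σ_τ` with initial data
`m_0, Σ_0` have solutions `m_τ = m_0 - K_τ (G m_0 - t)` and `Σ_τ = Σ_0 - K_τ G Σ_0`,
where `K_τ = τ Σ_0 Gᵀ (Γ + τ G Σ_0 Gᵀ)⁻¹` is the Kalman gain. -/
theorem linear_gaussian_homotopy_solution (D N : ℕ)
    (G : Matrix (Fin N) (Fin D) ℝ) (t : Fin N → ℝ)
    (Γ : Matrix (Fin N) (Fin N) ℝ) (hΓ : Γ.PosDef)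
    (m0 : Fin D → ℝ) (S0 : Matrix (Fin D) (Fin D) ℝ) (hS0 : S0.PosDef)
    (hinv : ∀ τ : ℝ, 0 ≤ τ → IsUnit (Γ + τ • (G * S0 * Gᵀ)))
    (m : ℝ → Fin D → ℝ) (S : ℝ → Matrix (Fin D) (Fin D) ℝ)
    (hm0 : m 0 = m0) (hS0' : S 0 = S0)
    (hmode : ∀ τ, 0 ≤ τ → ∀ i, HasDerivAt (fun τ' => m τ' i)
      (-(S τ *ᵥ (Gᵀ *ᵥ (Γ⁻¹ *ᵥ (G *ᵥ m τ - t)))) i) τ)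
    (hSode : ∀ τ, 0 ≤ τ → ∀ i j, HasDerivAt (fun τ' => S τ' i j)
      (-(S τ * Gᵀ * Γ⁻¹ * G * S τ) i j) τ)
    (K : ℝ → Matrix (Fin D) (Fin N) ℝ)
    (hK : ∀ τ, K τ = τ • (S0 * Gᵀ * (Γ + τ • (G * S0 * Gᵀ))⁻¹)) :
    ∀ τ, 0 ≤ τ →
      m τ = m0 - K τ *ᵥ (G *ᵥ m0 - t) ∧ S τ = S0 - K τ * G * S0 := by
  have hΓ2 : Γ⁻¹ * Γ = 1 := Matrix.nonsing_inv_mul Γ ((Matrix.isUnit_iff_isUnit_det Γ).1 hΓ.isUnit)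
  set Q : Matrix (Fin N) (Fin N) ℝ := G * S0 * Gᵀ with hQdef
  set A : ℝ → Matrix (Fin N) (Fin N) ℝ := fun τ => Γ + τ • Q with hAdef
  set Nn : ℝ → Matrix (Fin N) (Fin N) ℝ := fun τ => (A τ)⁻¹ with hNdef
  set X : ℝ → Matrix (Fin D) (Fin N) ℝ := fun τ => S0 * Gᵀ * Nn τ with hXdef
  set Y : ℝ → Matrix (Fin D) (Fin D) ℝ := fun τ => X τ * (G * S0) with hYdef
  set Sh : ℝ → Matrix (Fin D) (Fin D) ℝ := fun τ => S0 - τ • Y τ with hShdef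
  set Bm : Matrix (Fin D) (Fin D) ℝ := Gᵀ * Γ⁻¹ * G with hBdef
  set r : Fin N → ℝ := G *ᵥ m0 - t with hrdef
  set mh : ℝ → Fin D → ℝ := fun τ => m0 - (τ • X τ) *ᵥ r with hmhdef
  have hA1 : ∀ τ : ℝ, 0 ≤ τ → A τ * Nn τ = 1 := fun τ hτ =>
    Matrix.mul_nonsing_inv _ ((Matrix.isUnit_iff_isUnit_det _).1 (hinv τ hτ))
  have hA2 : ∀ τ : ℝ, 0 ≤ τ → Nn τ * A τ = 1 := fun τ hτ =>
    Matrix.nonsing_inv_mul _ ((Matrix.isUnit_iff_isUnit_det _).1 (hinv τ hτ))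
  have hAΓ : ∀ τ : ℝ, A τ - Γ = τ • Q := fun τ => by simp [hAdef]
  have id2 : ∀ τ : ℝ, 0 ≤ τ → τ • (Nn τ * Q * Γ⁻¹) = Γ⁻¹ - Nn τ := by
    intro τ hτ
    have h1 : Nn τ * (A τ - Γ) * Γ⁻¹ = Γ⁻¹ - Nn τ := by
      rw [mul_sub, sub_mul, hA2 τ hτ, one_mul, mul_assoc,
        Matrix.mul_nonsing_inv Γ ((Matrix.isUnit_iff_isUnit_det Γ).1 hΓ.isUnit), mul_one]
    rw [← h1, hAΓ]
    simp only [mul_smul_comm, smul_mul_assoc]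
  have id1 : ∀ τ : ℝ, 0 ≤ τ → τ • (Γ⁻¹ * Q * Nn τ) = Γ⁻¹ - Nn τ := by
    intro τ hτ
    have h1 : Γ⁻¹ * (A τ - Γ) * Nn τ = Γ⁻¹ - Nn τ := by
      rw [mul_sub, sub_mul, mul_assoc, hA1 τ hτ, mul_one, hΓ2, one_mul]
    rw [← h1, hAΓ]
    simp only [mul_smul_comm, smul_mul_assoc]
  have hSGG1 : ∀ τ : ℝ, 0 ≤ τ → Sh τ * (Gᵀ * Γ⁻¹) = X τ := by
    intro τ hτ
    have e1 : Y τ * (Gᵀ * Γ⁻¹) = S0 * Gᵀ * (Nn τ * Q * Γ⁻¹) := by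
      simp only [hYdef, hXdef, hQdef, Matrix.mul_assoc]
    have e2 : Sh τ * (Gᵀ * Γ⁻¹) = S0 * Gᵀ * Γ⁻¹ - S0 * Gᵀ * (τ • (Nn τ * Q * Γ⁻¹)) := by
      simp only [hShdef]
      rw [Matrix.sub_mul, Matrix.smul_mul, e1, ← Matrix.mul_smul, ← Matrix.mul_assoc]
    rw [e2, id2 τ hτ, Matrix.mul_sub, sub_sub_cancel, hXdef]
  have hGSh : ∀ τ : ℝ, 0 ≤ τ → G * Sh τ = G * S0 - τ • (Q * (Nn τ * (G * S0))) := by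
    intro τ hτ
    have e1 : G * Y τ = Q * (Nn τ * (G * S0)) := by
      simp only [hYdef, hXdef, hQdef, Matrix.mul_assoc]
    simp only [hShdef, Matrix.mul_sub, Matrix.mul_smul, e1]
  have hRic : ∀ τ : ℝ, 0 ≤ τ → Sh τ * Bm * Sh τ = Y τ - τ • (X τ * (Q * (Nn τ * (G * S0)))) := by
    intro τ hτ
    have e0 : Sh τ * Bm * Sh τ = Sh τ * (Gᵀ * Γ⁻¹) * (G * Sh τ) := by
      simp only [hBdef, Matrix.mul_assoc]
    rw [e0, hSGG1 τ hτ, hGSh τ hτ, Matrix.mul_sub, Matrix.mul_smul]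
    try simp only [hYdef]
  have hNd : ∀ τ : ℝ, 0 ≤ τ → HasDerivAt Nn (-(Nn τ * Q * Nn τ)) τ := by
    intro τ hτ
    have hu := hinv τ hτ
    have hAd : HasDerivAt A Q τ := by
      have h1 : HasDerivAt (fun s : ℝ => Γ + s • Q) ((1:ℝ) • Q) τ :=
        ((hasDerivAt_id τ).smul_const Q).const_add Γ
      simpa [hAdef] using h1
    have hF : HasFDerivAt (Ring.inverse : Matrix (Fin N) (Fin N) ℝ → _)
        (-(ContinuousLinearMap.mulLeftRight ℝ _ (↑hu.unit⁻¹) (↑hu.unit⁻¹))) (A τ) := by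
      simpa [hu.unit_spec] using hasFDerivAt_ringInverse (𝕜 := ℝ) hu.unit
    have hcomp := hF.comp_hasDerivAt τ hAd
    have hcu : ((hu.unit⁻¹ : _) : Matrix (Fin N) (Fin N) ℝ) = Nn τ := by
      rw [Matrix.coe_units_inv, hu.unit_spec, hNdef]
    have hval : (-(ContinuousLinearMap.mulLeftRight ℝ (Matrix (Fin N) (Fin N) ℝ)
        (↑hu.unit⁻¹) (↑hu.unit⁻¹))) Q = -(Nn τ * Q * Nn τ) := by
      simp only [ContinuousLinearMap.neg_apply, ContinuousLinearMap.mulLeftRight_apply, hcu]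
    rw [hval] at hcomp
    refine hcomp.congr_of_eventuallyEq (Filter.Eventually.of_forall fun s => ?_)
    simp only [hNdef]
    exact Matrix.nonsing_inv_eq_ringInverse (A s)
  have hShd : ∀ τ : ℝ, 0 ≤ τ → HasDerivAt Sh (-(Sh τ * Bm * Sh τ)) τ := by
    intro τ hτ
    have hXd : HasDerivAt X (S0 * Gᵀ * -(Nn τ * Q * Nn τ)) τ := by
      have h1 := hasDerivAt_matrix_const_mul (S0 * Gᵀ) (hNd τ hτ)
      simpa [hXdef, Matrix.mul_assoc] using h1
    have hYd : HasDerivAt Y (S0 * Gᵀ * -(Nn τ * Q * Nn τ) * (G * S0)) τ := by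
      have h1 := hasDerivAt_matrix_mul_const (G * S0) hXd
      simpa [hYdef] using h1
    have h1 := ((hasDerivAt_id τ).smul hYd).const_sub S0
    have e2 : S0 * Gᵀ * -(Nn τ * Q * Nn τ) * (G * S0) = -(X τ * (Q * (Nn τ * (G * S0)))) := by
      simp only [hXdef, Matrix.mul_neg, Matrix.neg_mul, Matrix.mul_assoc]
    have hval : -(Sh τ * Bm * Sh τ)
        = -(id τ • (S0 * Gᵀ * -(Nn τ * Q * Nn τ) * (G * S0)) + (1:ℝ) • Y τ) := by
      rw [hRic τ hτ, e2]
      simp only [id_eq, one_smul, smul_neg]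
      abel
    rw [hval]
    refine h1.congr_of_eventuallyEq (Filter.Eventually.of_forall fun s => ?_)
    simp [hShdef]
  have hSderiv : ∀ τ : ℝ, 0 ≤ τ → HasDerivAt S (-(S τ * Bm * S τ)) τ := by
    intro τ hτ
    apply hasDerivAt_entries
    intro i j
    convert hSode τ hτ i j using 2
    simp only [Matrix.neg_apply]
    have e : S τ * Bm * S τ = S τ * Gᵀ * Γ⁻¹ * G * S τ := by
      simp only [hBdef, Matrix.mul_assoc]
    rw [e]
  have hSh0 : Sh 0 = S0 := by simp [hShdef]
  have Sres : ∀ τ : ℝ, 0 ≤ τ → S τ = Sh τ := by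
    intro T hT
    have hcontS : ContinuousOn S (Icc 0 T) := fun τ hτ =>
      ((hSderiv τ hτ.1).continuousAt).continuousWithinAt
    have hcontSh : ContinuousOn Sh (Icc 0 T) := fun τ hτ =>
      ((hShd τ hτ.1).continuousAt).continuousWithinAt
    obtain ⟨C1, hC1⟩ := isCompact_Icc.exists_bound_of_continuousOn hcontS
    obtain ⟨C2, hC2⟩ := isCompact_Icc.exists_bound_of_continuousOn hcontSh
    set R : ℝ := max (max C1 C2) 0 with hRdef
    set KK : NNReal := Real.toNNReal (2 * ‖Bm‖ * R) with hKKdef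
    have hv : ∀ s : ℝ, LipschitzOnWith KK (fun x => -(x * Bm * x)) (Metric.closedBall 0 R) := by
      intro s
      rw [lipschitzOnWith_iff_dist_le_mul]
      intro x hx y hy
      rw [dist_eq_norm, dist_eq_norm]
      have hx' : ‖x‖ ≤ R := mem_closedBall_zero_iff.1 hx
      have hy' : ‖y‖ ≤ R := mem_closedBall_zero_iff.1 hy
      have key : -(x * Bm * x) - -(y * Bm * y) = (y - x) * Bm * x + y * (Bm * (y - x)) := by
        noncomm_ring
      rw [key]
      have h1 : ‖(y - x) * Bm * x‖ ≤ ‖y - x‖ * ‖Bm‖ * ‖x‖ :=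
        le_trans (norm_mul_le _ _)
          (mul_le_mul_of_nonneg_right (norm_mul_le _ _) (norm_nonneg _))
      have h2 : ‖y * (Bm * (y - x))‖ ≤ ‖y‖ * (‖Bm‖ * ‖y - x‖) :=
        le_trans (norm_mul_le _ _)
          (mul_le_mul_of_nonneg_left (norm_mul_le _ _) (norm_nonneg _))
      have h3 : ‖y - x‖ = ‖x - y‖ := norm_sub_rev _ _
      have hKKval : (KK : ℝ) = max (2 * ‖Bm‖ * R) 0 := Real.coe_toNNReal' _
      have hB0 : (0:ℝ) ≤ ‖Bm‖ := norm_nonneg _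
      calc ‖(y - x) * Bm * x + y * (Bm * (y - x))‖
          ≤ ‖(y - x) * Bm * x‖ + ‖y * (Bm * (y - x))‖ := norm_add_le _ _
        _ ≤ ‖y - x‖ * ‖Bm‖ * ‖x‖ + ‖y‖ * (‖Bm‖ * ‖y - x‖) := add_le_add h1 h2
        _ ≤ (KK : ℝ) * ‖x - y‖ := by
            rw [h3, hKKval]
            have hmax : 2 * ‖Bm‖ * R ≤ max (2 * ‖Bm‖ * R) 0 := le_max_left _ _
            nlinarith [norm_nonneg (x - y), mul_le_mul_of_nonneg_left hx' hB0,
              mul_le_mul_of_nonneg_left hy' hB0]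
    have huniq := ODE_solution_unique_of_mem_Icc_right
      (v := fun _ x => -(x * Bm * x))
      (s := fun _ => Metric.closedBall (0 : Matrix (Fin D) (Fin D) ℝ) R)
      (fun s _ => hv s) hcontS
      (fun τ hτ => ((hSderiv τ hτ.1).hasDerivWithinAt))
      (fun τ hτ => mem_closedBall_zero_iff.2
        ((hC1 τ (Ico_subset_Icc_self hτ)).trans ((le_max_left C1 C2).trans (le_max_left _ _))))
      hcontSh
      (fun τ hτ => ((hShd τ hτ.1).hasDerivWithinAt))
      (fun τ hτ => mem_closedBall_zero_iff.2
        ((hC2 τ (Ico_subset_Icc_self hτ)).trans ((le_max_right C1 C2).trans (le_max_left _ _))))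
      (by rw [hS0', hSh0])
    exact huniq (right_mem_Icc.2 hT)
  have hmhd : ∀ τ : ℝ, 0 ≤ τ →
      HasDerivAt mh (-(X τ *ᵥ r - τ • ((X τ * (Q * Nn τ)) *ᵥ r))) τ := by
    intro τ hτ
    have hXd : HasDerivAt X (S0 * Gᵀ * -(Nn τ * Q * Nn τ)) τ := by
      have h1 := hasDerivAt_matrix_const_mul (S0 * Gᵀ) (hNd τ hτ)
      simpa [hXdef, Matrix.mul_assoc] using h1
    have hsX := (hasDerivAt_id τ).smul hXd
    have hLd := hasDerivAt_mulVec_const r hsX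
    have hmain := hLd.const_sub m0
    have e : -((id τ • (S0 * Gᵀ * -(Nn τ * Q * Nn τ)) + (1:ℝ) • X τ) *ᵥ r)
        = -(X τ *ᵥ r - τ • ((X τ * (Q * Nn τ)) *ᵥ r)) := by
      have eX : S0 * Gᵀ * -(Nn τ * Q * Nn τ) = -(X τ * (Q * Nn τ)) := by
        simp only [hXdef, Matrix.mul_neg, Matrix.neg_mul, Matrix.mul_assoc]
      rw [Matrix.add_mulVec, one_smul, Matrix.smul_mulVec, eX, Matrix.neg_mulVec,
        smul_neg, id_eq]
      abel_nf
    rw [← e]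
    exact hmain
  have hmh0 : mh 0 = m0 := by simp [hmhdef]
  have mres : ∀ τ : ℝ, 0 ≤ τ → m τ = mh τ := by
    intro T hT
    set p : ℝ → ℝ := fun s => min (max s 0) T with hpdef
    have hp_mem : ∀ s, p s ∈ Icc (0:ℝ) T := fun s =>
      ⟨le_min (le_max_right _ _) hT, min_le_right _ _⟩
    have hp_eq : ∀ s ∈ Icc (0:ℝ) T, p s = s := by
      intro s hs
      simp [hpdef, max_eq_left hs.1, min_eq_left hs.2]
    have hcontX : ContinuousOn X (Icc 0 T) := by
      intro τ hτ
      have hXd : HasDerivAt X (S0 * Gᵀ * -(Nn τ * Q * Nn τ)) τ := by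
        have h1 := hasDerivAt_matrix_const_mul (S0 * Gᵀ) (hNd τ hτ.1)
        simpa [hXdef, Matrix.mul_assoc] using h1
      exact hXd.continuousAt.continuousWithinAt
    obtain ⟨C3, hC3⟩ := isCompact_Icc.exists_bound_of_continuousOn hcontX
    set KK2 : NNReal := Real.toNNReal (C3 * ‖G‖) with hKK2def
    set v2 : ℝ → (Fin D → ℝ) → (Fin D → ℝ) := fun s x => -(X (p s) *ᵥ (G *ᵥ x - t)) with hv2def
    have hv2 : ∀ s : ℝ, LipschitzOnWith KK2 (v2 s) univ := by
      intro s
      rw [lipschitzOnWith_iff_dist_le_mul]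
      intro x _ y _
      rw [dist_eq_norm, dist_eq_norm]
      have key : v2 s x - v2 s y = X (p s) *ᵥ (G *ᵥ (y - x)) := by
        simp only [hv2def]
        rw [neg_sub_neg, ← Matrix.mulVec_sub, sub_sub_sub_cancel_right, ← Matrix.mulVec_sub]
      rw [key]
      have h1 : ‖X (p s) *ᵥ (G *ᵥ (y - x))‖ ≤ ‖X (p s)‖ * (‖G‖ * ‖y - x‖) :=
        le_trans (Matrix.linfty_opNorm_mulVec _ _)
          (mul_le_mul_of_nonneg_left (Matrix.linfty_opNorm_mulVec _ _) (norm_nonneg _))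
      have h2 : ‖X (p s)‖ ≤ C3 := hC3 _ (hp_mem s)
      have hKKval : (KK2 : ℝ) = max (C3 * ‖G‖) 0 := Real.coe_toNNReal' _
      have h3 : ‖y - x‖ = ‖x - y‖ := norm_sub_rev _ _
      calc ‖X (p s) *ᵥ (G *ᵥ (y - x))‖ ≤ ‖X (p s)‖ * (‖G‖ * ‖y - x‖) := h1
        _ ≤ (KK2 : ℝ) * ‖x - y‖ := by
            rw [h3, hKKval]
            have d0 : (0:ℝ) ≤ ‖x - y‖ := norm_nonneg _
            have g0 : (0:ℝ) ≤ ‖G‖ * ‖x - y‖ := by positivity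
            calc ‖X (p s)‖ * (‖G‖ * ‖x - y‖) ≤ C3 * (‖G‖ * ‖x - y‖) :=
                  mul_le_mul_of_nonneg_right h2 g0
              _ = C3 * ‖G‖ * ‖x - y‖ := by ring
              _ ≤ max (C3 * ‖G‖) 0 * ‖x - y‖ :=
                  mul_le_mul_of_nonneg_right (le_max_left _ _) d0
    have hmderiv : ∀ τ ∈ Ico (0:ℝ) T, HasDerivAt m (v2 τ (m τ)) τ := by
      intro τ hτ
      have h := hasDerivAt_pi.2 (hmode τ hτ.1)
      have e2 : S τ * Gᵀ * Γ⁻¹ = X τ := by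
        rw [Sres τ hτ.1, Matrix.mul_assoc, hSGG1 τ hτ.1]
      have e : v2 τ (m τ) = -(S τ *ᵥ (Gᵀ *ᵥ (Γ⁻¹ *ᵥ (G *ᵥ m τ - t)))) := by
        simp only [hv2def]
        rw [hp_eq τ (Ico_subset_Icc_self hτ), Matrix.mulVec_mulVec, Matrix.mulVec_mulVec, e2]
      rw [e]
      exact h
    have hmhderiv : ∀ τ ∈ Ico (0:ℝ) T, HasDerivAt mh (v2 τ (mh τ)) τ := by
      intro τ hτ
      have h := hmhd τ hτ.1
      have eG : G * X τ = Q * Nn τ := by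
        simp only [hXdef, hQdef, Matrix.mul_assoc]
      have e1 : G *ᵥ mh τ - t = r - τ • ((Q * Nn τ) *ᵥ r) := by
        simp only [hmhdef]
        rw [Matrix.mulVec_sub, sub_right_comm, ← hrdef, Matrix.mulVec_mulVec, Matrix.mul_smul,
          Matrix.smul_mulVec, eG]
      have e : v2 τ (mh τ) = -(X τ *ᵥ r - τ • ((X τ * (Q * Nn τ)) *ᵥ r)) := by
        simp only [hv2def]
        rw [hp_eq τ (Ico_subset_Icc_self hτ), e1, Matrix.mulVec_sub, Matrix.mulVec_smul,
          Matrix.mulVec_mulVec]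
      rw [e]
      exact h
    have hcontm : ContinuousOn m (Icc 0 T) := fun τ hτ =>
      (hasDerivAt_pi.2 (hmode τ hτ.1)).continuousAt.continuousWithinAt
    have hcontmh : ContinuousOn mh (Icc 0 T) := fun τ hτ =>
      (hmhd τ hτ.1).continuousAt.continuousWithinAt
    have huniq := ODE_solution_unique_of_mem_Icc_right
      (v := v2) (s := fun _ => (univ : Set (Fin D → ℝ)))
      (fun s _ => hv2 s) hcontm
      (fun τ hτ => (hmderiv τ hτ).hasDerivWithinAt)
      (fun τ _ => mem_univ _)
      hcontmh
      (fun τ hτ => (hmhderiv τ hτ).hasDerivWithinAt)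
      (fun τ _ => mem_univ _)
      (by rw [hm0, hmh0])
    exact huniq (right_mem_Icc.2 hT)
  intro τ hτ
  constructor
  · rw [mres τ hτ, hK τ]
    try simp only [hmhdef, hXdef, hNdef, hAdef, hrdef]
  · rw [Sres τ hτ, hK τ]
    try simp only [hShdef, hYdef, hXdef, hNdef, hAdef, Matrix.smul_mul, Matrix.mul_assoc]
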